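/- arXiv:0903.1018 — 2 statements merged into one kernel-verified Lean document; each statement's English description precedes it below -/
import Mathlib

section
/- On the jet space M = J^1(ℝ^n, ℝ^m) with contact forms θ^a = du^a − p^a_i dx^i and ψ^a = dp^a_i ∧ dx^{(i)}, let H : ℝ^n → ℝ^m be a harmonic function (pulled back to M via x) and ρ = (−1)^n * dH (Hodge star on ℝ^n with the flat metric). Then the n-form Φ = ᵗρ ∧ θ + ᵗH ψ = Σ_a (ρ^a ∧ θ^a + H^a ψ^a) is closed. -/
open Matrix Finset

namespace ConsLaw

variable {V : Type*}

def bigM {n : ℕ} (v : Fin (n + 1) → V) (r0 : V → ℝ) (rows : Fin n → V → ℝ) :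
    Matrix (Fin (n + 1)) (Fin (n + 1)) ℝ :=
  Matrix.of fun k j => Fin.cases (motive := fun _ => ℝ) (r0 (v j)) (fun k' => rows k' (v j)) k

lemma laplace {n : ℕ} (v : Fin (n + 1) → V) (r0 : V → ℝ) (rows : Fin n → V → ℝ) :
    ∑ j : Fin (n + 1), (-1 : ℝ) ^ (j : ℕ) * r0 (v j) *
      (Matrix.of fun k l : Fin n => rows k (v (j.succAbove l))).det
    = (bigM v r0 rows).det := by
  have hsub : ∀ j : Fin (n + 1), (bigM v r0 rows).submatrix Fin.succ j.succAbove
      = Matrix.of fun k l : Fin n => rows k (v (j.succAbove l)) := by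
    intro j; ext k l; simp [bigM]
  have h0 : ∀ j, (bigM v r0 rows) 0 j = r0 (v j) := by intro j; simp [bigM]
  rw [Matrix.det_succ_row_zero]
  exact (Finset.sum_congr rfl fun j _ => by rw [hsub, h0]).symm

lemma bigM_dup {n : ℕ} (v : Fin (n + 1) → V) (rows : Fin n → V → ℝ) (k : Fin n) :
    (bigM v (rows k) rows).det = 0 := by
  refine Matrix.det_zero_of_row_eq (i := 0) (j := k.succ) (Fin.succ_ne_zero k).symm ?_
  ext j
  simp [bigM]

lemma bigM_swap {n : ℕ} (v : Fin (n + 1) → V) (r0 s : V → ℝ) (rows : Fin n → V → ℝ)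
    (i : Fin n) :
    (bigM v r0 (Function.update rows i s)).det
      = -(bigM v s (Function.update rows i r0)).det := by
  have h : bigM v r0 (Function.update rows i s)
      = (bigM v s (Function.update rows i r0)).submatrix (Equiv.swap 0 i.succ) id := by
    ext k j
    refine Fin.cases ?_ (fun k' => ?_) k
    · simp [bigM, Equiv.swap_apply_left]
    · rcases eq_or_ne k' i with rfl | hk
      · simp [bigM, Equiv.swap_apply_right]
      · have h1 : Equiv.swap (0 : Fin (n + 1)) i.succ k'.succ = k'.succ :=
          Equiv.swap_apply_of_ne_of_ne (Fin.succ_ne_zero k') (by simpa using hk)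
        simp [bigM, h1, Function.update_apply, hk]
  rw [h, Matrix.det_permute, Equiv.Perm.sign_swap (Fin.succ_ne_zero i).symm]
  simp

lemma bigM_update {n : ℕ} (v : Fin (n + 1) → V) (r0 r1 : V → ℝ) (rows : Fin n → V → ℝ) :
    bigM v r0 rows = (bigM v r1 rows).updateRow 0 (fun j => r0 (v j)) := by
  ext k j
  rw [Matrix.updateRow_apply]
  refine Fin.cases ?_ (fun k' => ?_) k <;> simp [bigM, Fin.succ_ne_zero]

lemma bigM_row0 {n : ℕ} (v : Fin (n + 1) → V) (rows : Fin n → V → ℝ) (c : Fin n → ℝ)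
    (f : Fin n → V → ℝ) (r1 : V → ℝ) :
    (bigM v (fun z => ∑ k, c k * f k z) rows).det
      = ∑ k, c k * (bigM v (f k) rows).det := by
  rw [bigM_update v _ r1 rows]
  have hrow : (fun j => ∑ k, c k * f k (v j)) = ∑ k, c k • fun j => f k (v j) := by
    funext j; simp [Finset.sum_apply]
  rw [hrow]
  have hdet : ((bigM v r1 rows).updateRow 0 (∑ k, c k • fun j => f k (v j))).det
      = ∑ k, ((bigM v r1 rows).updateRow 0 (c k • fun j => f k (v j))).det :=
    (Matrix.detRowAlternating (R := ℝ) (n := Fin (n + 1))).toMultilinearMap.map_update_sum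
      Finset.univ (0 : Fin (n + 1)) (fun k => c k • fun j => f k (v j)) (bigM v r1 rows)
  rw [hdet]
  refine Finset.sum_congr rfl fun k _ => ?_
  rw [Matrix.det_updateRow_smul, ← bigM_update v (f k) r1 rows]

lemma detA_eq {n : ℕ} (X : Matrix (Fin n) (Fin n) ℝ) (i : Fin n) (c p : Fin n → ℝ) :
    (Matrix.of fun k j => if k = i then c j - ∑ l, p l * X l j else X k j).det
      = (X.updateRow i c).det - p i * X.det := by
  have h : (Matrix.of fun k j => if k = i then c j - ∑ l, p l * X l j else X k j)
      = X.updateRow i (c + ∑ l, (-p l) • X l) := by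
    ext k j
    rw [Matrix.updateRow_apply]
    by_cases hk : k = i <;>
      simp [hk, Finset.sum_apply, sub_eq_add_neg, ← Finset.sum_neg_distrib]
  rw [h, Matrix.det_updateRow_add, Matrix.det_updateRow_sum]
  simp [sub_eq_add_neg]

/-- Jet space. -/
abbrev J (n m : ℕ) := (Fin n → ℝ) × (Fin m → ℝ) × (Fin m → Fin n → ℝ)

variable {n m : ℕ}

def rX (n m : ℕ) : Fin n → J n m → ℝ := fun k z => z.1 k

def rU (n m : ℕ) (a : Fin m) : J n m → ℝ := fun z => z.2.1 a

def rP (n m : ℕ) (a : Fin m) (i : Fin n) : J n m → ℝ := fun z => z.2.2 a i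

def rmat (w : Fin n → J n m) (rows : Fin n → J n m → ℝ) : Matrix (Fin n) (Fin n) ℝ :=
  Matrix.of fun k l => rows k (w l)

lemma laplaceR (v : Fin (n + 1) → J n m) (r0 : J n m → ℝ) (rows : Fin n → J n m → ℝ) :
    ∑ j : Fin (n + 1), (-1 : ℝ) ^ (j : ℕ) * r0 (v j) * (rmat (j.removeNth v) rows).det
    = (bigM v r0 rows).det :=
  laplace v r0 rows

lemma rmat_update (w : Fin n → J n m) (rows : Fin n → J n m → ℝ) (i : Fin n)
    (r : J n m → ℝ) :
    (rmat w rows).updateRow i (fun l => r (w l)) = rmat w (Function.update rows i r) := by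
  ext k l
  rw [Matrix.updateRow_apply]
  by_cases hk : k = i <;> simp [rmat, Function.update_apply, hk]

end ConsLaw

open ConsLaw

/-- on the jet space `M = J¹(ℝ^n, ℝ^m) = ℝ^n × ℝ^m × (ℝ^m ⊗ (ℝ^n)^*)` with
coordinates `(x, u, p)`, contact forms `θ^a = du^a − p^a_i dx^i`, `ψ^a = dp^a_i ∧ dx^{(i)}`,
let `H : ℝ^n → ℝ^m` be harmonic and `ρ = (−1)^n * dH`.  Then the `n`-form
`Φ = ᵗρ ∧ θ + ᵗH ψ` is closed.

In coordinates, `(θ^a ∧ dx^{(i)})(w_1,…,w_n)` is the determinant of the matrix whose `i`-th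
row is `(θ^a(w_j))_j` and whose other rows are the `x`-components `((w_j)_x^k)_j`; likewise
for `(dp^a_i ∧ dx^{(i)})`.  With these conventions
`Φ_q(w) = Σ_a ( − Σ_i ∂_iH^a(x) det(row i ↦ θ^a(w_j)) + H^a(x) Σ_i det(row i ↦ (w_j)_p^{a,i}) )`,
and closedness is `dΦ(v₀,…,v_n) = Σ_j (−1)^j D_{v_j} Φ(v₀,…,v̂_j,…,v_n) = 0`. -/
theorem conservation_law_closed
    (n m : ℕ) (H : (Fin n → ℝ) → Fin m → ℝ) (hH : ContDiff ℝ 2 H)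
    (hharm : ∀ (a : Fin m) (x : Fin n → ℝ),
      ∑ i : Fin n, fderiv ℝ (fun y => fderiv ℝ (fun z => H z a) y (Pi.single i 1))
        x (Pi.single i 1) = 0)
    (Φ : ((Fin n → ℝ) × (Fin m → ℝ) × (Fin m → Fin n → ℝ)) →
      (Fin n → ((Fin n → ℝ) × (Fin m → ℝ) × (Fin m → Fin n → ℝ))) → ℝ)
    (hΦ : ∀ q w, Φ q w =
      ∑ a : Fin m,
        (-(∑ i : Fin n, fderiv ℝ (fun y => H y a) q.1 (Pi.single i 1) *
            Matrix.det (Matrix.of fun k j : Fin n =>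
              if k = i then (w j).2.1 a - ∑ l : Fin n, q.2.2 a l * (w j).1 l
              else (w j).1 k))
         + H q.1 a * ∑ i : Fin n,
            Matrix.det (Matrix.of fun k j : Fin n =>
              if k = i then (w j).2.2 a i else (w j).1 k))) :
    ∀ (q : (Fin n → ℝ) × (Fin m → ℝ) × (Fin m → Fin n → ℝ))
      (v : Fin (n + 1) → ((Fin n → ℝ) × (Fin m → ℝ) × (Fin m → Fin n → ℝ))),
      ∑ j : Fin (n + 1), (-1 : ℝ) ^ (j : ℕ) *
        fderiv ℝ (fun y => Φ y (j.removeNth v)) q (v j) = 0 := by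
  classical
  intro q v
  set g : Fin m → Fin n → (Fin n → ℝ) → ℝ :=
    fun a i y => fderiv ℝ (fun z => H z a) y (Pi.single i 1) with hgdef
  have hHa : ∀ a, ContDiff ℝ 2 (fun z : Fin n → ℝ => H z a) := fun a => contDiff_pi.mp hH a
  have Phi_eq : ∀ (y : J n m) (w : Fin n → J n m),
      Φ y w = ∑ a, ∑ i,
        (g a i y.1 * y.2.2 a i * (rmat w (rX n m)).det
          - g a i y.1 * (rmat w (Function.update (rX n m) i (rU n m a))).det
          + H y.1 a * (rmat w (Function.update (rX n m) i (rP n m a i))).det) := by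
    intro y w
    rw [hΦ]
    refine Finset.sum_congr rfl fun a _ => ?_
    have hA : ∀ i : Fin n,
        (Matrix.of fun k j : Fin n =>
          if k = i then (w j).2.1 a - ∑ l : Fin n, y.2.2 a l * (w j).1 l
          else (w j).1 k).det
        = (rmat w (Function.update (rX n m) i (rU n m a))).det
            - y.2.2 a i * (rmat w (rX n m)).det := by
      intro i
      have h0 : (Matrix.of fun k j : Fin n =>
          if k = i then (w j).2.1 a - ∑ l : Fin n, y.2.2 a l * (w j).1 l
          else (w j).1 k)
          = (Matrix.of fun k j : Fin n =>
          if k = i then (fun l => rU n m a (w l)) j - ∑ l : Fin n, y.2.2 a l * (rmat w (rX n m)) l j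
          else (rmat w (rX n m)) k j) := rfl
      rw [h0, detA_eq, rmat_update]
    have hB : ∀ i : Fin n,
        (Matrix.of fun k j : Fin n => if k = i then (w j).2.2 a i else (w j).1 k)
        = rmat w (Function.update (rX n m) i (rP n m a i)) := by
      intro i
      ext k j
      by_cases hk : k = i <;> simp [rmat, rX, rP, Function.update_apply, hk]
    simp only [hA, hB]
    rw [Finset.mul_sum, ← Finset.sum_neg_distrib, ← Finset.sum_add_distrib]
    refine Finset.sum_congr rfl fun i _ => ?_
    ring
  have hgC : ∀ a i, ContDiff ℝ 1 (g a i) := by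
    intro a i
    exact (ContinuousLinearMap.apply ℝ ℝ (Pi.single i 1)).contDiff.comp
      ((hHa a).fderiv_right (m := 1) (by norm_num))
  have h1 : ∀ a i, HasFDerivAt (fun y : J n m => g a i y.1)
      ((fderiv ℝ (g a i) q.1).comp
        (ContinuousLinearMap.fst ℝ (Fin n → ℝ) ((Fin m → ℝ) × (Fin m → Fin n → ℝ)))) q :=
    fun a i =>
      ((((hgC a i).differentiable one_ne_zero) q.1).hasFDerivAt).comp q hasFDerivAt_fst
  have h3 : ∀ a, HasFDerivAt (fun y : J n m => H y.1 a)
      ((fderiv ℝ (fun z => H z a) q.1).comp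
        (ContinuousLinearMap.fst ℝ (Fin n → ℝ) ((Fin m → ℝ) × (Fin m → Fin n → ℝ)))) q :=
    fun a =>
      ((((hHa a).differentiable (by norm_num)) q.1).hasFDerivAt).comp q hasFDerivAt_fst
  have h2 : ∀ (a : Fin m) (i : Fin n), HasFDerivAt (fun y : J n m => y.2.2 a i)
      (((ContinuousLinearMap.proj i).comp
        ((ContinuousLinearMap.proj a).comp
          ((ContinuousLinearMap.snd ℝ (Fin m → ℝ) (Fin m → Fin n → ℝ)).comp
            (ContinuousLinearMap.snd ℝ (Fin n → ℝ) ((Fin m → ℝ) × (Fin m → Fin n → ℝ))))) :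
            J n m →L[ℝ] ℝ)) q :=
    fun a i =>
      (((ContinuousLinearMap.proj i).comp
        ((ContinuousLinearMap.proj a).comp
          ((ContinuousLinearMap.snd ℝ (Fin m → ℝ) (Fin m → Fin n → ℝ)).comp
            (ContinuousLinearMap.snd ℝ (Fin n → ℝ) ((Fin m → ℝ) × (Fin m → Fin n → ℝ))))) :
            J n m →L[ℝ] ℝ)).hasFDerivAt
  have keyD : ∀ (w : Fin n → J n m) (u : J n m),
      fderiv ℝ (fun y => Φ y w) q u
        = ∑ a, ∑ i,
          ((fderiv ℝ (g a i) q.1 u.1 * q.2.2 a i + g a i q.1 * u.2.2 a i)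
              * (rmat w (rX n m)).det
            - fderiv ℝ (g a i) q.1 u.1
              * (rmat w (Function.update (rX n m) i (rU n m a))).det
            + fderiv ℝ (fun z => H z a) q.1 u.1
              * (rmat w (Function.update (rX n m) i (rP n m a i))).det) := by
    intro w u
    have hfun : (fun y => Φ y w) = fun y : J n m => ∑ a, ∑ i,
        (g a i y.1 * y.2.2 a i * (rmat w (rX n m)).det
          - g a i y.1 * (rmat w (Function.update (rX n m) i (rU n m a))).det
          + H y.1 a * (rmat w (Function.update (rX n m) i (rP n m a i))).det) :=
      funext fun y => Phi_eq y w
    rw [hfun]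
    have hD := HasFDerivAt.fun_sum (u := (Finset.univ : Finset (Fin m)))
      (x := q)
      (fun a _ => HasFDerivAt.fun_sum (u := (Finset.univ : Finset (Fin n)))
        (fun i _ =>
          (((((h1 a i).fun_mul (h2 a i)).mul_const ((rmat w (rX n m)).det)).fun_sub
            ((h1 a i).mul_const
              ((rmat w (Function.update (rX n m) i (rU n m a))).det))).fun_add
            ((h3 a).mul_const
              ((rmat w (Function.update (rX n m) i (rP n m a i))).det)))))
    rw [hD.fderiv]
    simp only [ContinuousLinearMap.sum_apply, ContinuousLinearMap.add_apply,
      ContinuousLinearMap.coe_sub', Pi.sub_apply, ContinuousLinearMap.smul_apply,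
      smul_eq_mul, ContinuousLinearMap.coe_comp', Function.comp_apply,
      ContinuousLinearMap.coe_fst', ContinuousLinearMap.proj_apply,
      ContinuousLinearMap.coe_snd']
    exact Finset.sum_congr rfl fun a _ => Finset.sum_congr rfl fun i _ => by ring
  have expand : ∀ (L : (Fin n → ℝ) →L[ℝ] ℝ) (z : Fin n → ℝ),
      L z = ∑ k, z k * L (Pi.single k 1) := by
    intro L z
    have h := L.toLinearMap.pi_apply_eq_sum_univ z
    simp only [ContinuousLinearMap.coe_coe, smul_eq_mul] at h
    have hs : ∀ k : Fin n, (Pi.single k 1 : Fin n → ℝ) = fun j => if k = j then 1 else 0 := by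
      intro k; funext j; simp [Pi.single_apply, eq_comm]
    simp only [hs]
    exact h
  have hexp : ∀ (L : (Fin n → ℝ) →L[ℝ] ℝ) (rows : Fin n → J n m → ℝ),
      (∑ j : Fin (n + 1), (-1 : ℝ) ^ (j : ℕ) * L ((v j).1)
          * (rmat (j.removeNth v) rows).det)
        = ∑ k, L (Pi.single k 1) * (bigM v (rX n m k) rows).det := by
    intro L rows
    have h1 : ∀ j : Fin (n + 1), (-1 : ℝ) ^ (j : ℕ) * L ((v j).1)
          * (rmat (j.removeNth v) rows).det
        = ∑ k, L (Pi.single k 1)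
            * ((-1 : ℝ) ^ (j : ℕ) * rX n m k (v j) * (rmat (j.removeNth v) rows).det) := by
      intro j
      rw [expand L ((v j).1)]
      simp only [Finset.mul_sum, Finset.sum_mul]
      exact Finset.sum_congr rfl fun k _ => by rw [rX]; ring
    rw [Finset.sum_congr rfl fun j _ => h1 j, Finset.sum_comm]
    refine Finset.sum_congr rfl fun k _ => ?_
    rw [← Finset.mul_sum, laplaceR v (rX n m k) rows]
  have main : ∀ (a : Fin m) (i : Fin n),
      ∑ j : Fin (n + 1), (-1 : ℝ) ^ (j : ℕ) *
        ((fderiv ℝ (g a i) q.1 (v j).1 * q.2.2 a i + g a i q.1 * (v j).2.2 a i)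
            * (rmat (j.removeNth v) (rX n m)).det
          - fderiv ℝ (g a i) q.1 (v j).1
            * (rmat (j.removeNth v) (Function.update (rX n m) i (rU n m a))).det
          + fderiv ℝ (fun z => H z a) q.1 (v j).1
            * (rmat (j.removeNth v) (Function.update (rX n m) i (rP n m a i))).det)
      = fderiv ℝ (g a i) q.1 (Pi.single i 1) * (bigM v (rU n m a) (rX n m)).det := by
    intro a i
    have hsplit : ∑ j : Fin (n + 1), (-1 : ℝ) ^ (j : ℕ) *
        ((fderiv ℝ (g a i) q.1 (v j).1 * q.2.2 a i + g a i q.1 * (v j).2.2 a i)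
            * (rmat (j.removeNth v) (rX n m)).det
          - fderiv ℝ (g a i) q.1 (v j).1
            * (rmat (j.removeNth v) (Function.update (rX n m) i (rU n m a))).det
          + fderiv ℝ (fun z => H z a) q.1 (v j).1
            * (rmat (j.removeNth v) (Function.update (rX n m) i (rP n m a i))).det)
        = q.2.2 a i * (∑ j : Fin (n + 1), (-1 : ℝ) ^ (j : ℕ) *
              fderiv ℝ (g a i) q.1 (v j).1 * (rmat (j.removeNth v) (rX n m)).det)
          + g a i q.1 * (∑ j : Fin (n + 1), (-1 : ℝ) ^ (j : ℕ) *
              rP n m a i (v j) * (rmat (j.removeNth v) (rX n m)).det)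
          - (∑ j : Fin (n + 1), (-1 : ℝ) ^ (j : ℕ) *
              fderiv ℝ (g a i) q.1 (v j).1
              * (rmat (j.removeNth v) (Function.update (rX n m) i (rU n m a))).det)
          + (∑ j : Fin (n + 1), (-1 : ℝ) ^ (j : ℕ) *
              fderiv ℝ (fun z => H z a) q.1 (v j).1
              * (rmat (j.removeNth v) (Function.update (rX n m) i (rP n m a i))).det) := by
      rw [Finset.mul_sum, Finset.mul_sum, ← Finset.sum_add_distrib,
        ← Finset.sum_sub_distrib, ← Finset.sum_add_distrib]
      exact Finset.sum_congr rfl fun j _ => by rw [rP]; ring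
    rw [hsplit]
    have hA1 : (∑ j : Fin (n + 1), (-1 : ℝ) ^ (j : ℕ) *
        fderiv ℝ (g a i) q.1 (v j).1 * (rmat (j.removeNth v) (rX n m)).det) = 0 := by
      rw [hexp (fderiv ℝ (g a i) q.1) (rX n m)]
      refine Finset.sum_eq_zero fun k _ => ?_
      rw [bigM_dup v (rX n m) k, mul_zero]
    have hA2 : (∑ j : Fin (n + 1), (-1 : ℝ) ^ (j : ℕ) *
        rP n m a i (v j) * (rmat (j.removeNth v) (rX n m)).det)
        = (bigM v (rP n m a i) (rX n m)).det := laplaceR v (rP n m a i) (rX n m)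
    have hA3 : (∑ j : Fin (n + 1), (-1 : ℝ) ^ (j : ℕ) *
        fderiv ℝ (g a i) q.1 (v j).1
        * (rmat (j.removeNth v) (Function.update (rX n m) i (rU n m a))).det)
        = -(fderiv ℝ (g a i) q.1 (Pi.single i 1)
            * (bigM v (rU n m a) (rX n m)).det) := by
      rw [hexp (fderiv ℝ (g a i) q.1) (Function.update (rX n m) i (rU n m a))]
      rw [Finset.sum_eq_single i]
      · rw [bigM_swap v (rX n m i) (rU n m a) (rX n m) i, Function.update_eq_self]
        ring
      · intro k _ hk
        have hup : Function.update (rX n m) i (rU n m a) k = rX n m k :=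
          Function.update_of_ne hk _ _
        rw [← hup, bigM_dup v (Function.update (rX n m) i (rU n m a)) k, mul_zero]
      · intro hi
        exact absurd (Finset.mem_univ i) hi
    have hA4 : (∑ j : Fin (n + 1), (-1 : ℝ) ^ (j : ℕ) *
        fderiv ℝ (fun z => H z a) q.1 (v j).1
        * (rmat (j.removeNth v) (Function.update (rX n m) i (rP n m a i))).det)
        = -(g a i q.1 * (bigM v (rP n m a i) (rX n m)).det) := by
      rw [hexp (fderiv ℝ (fun z => H z a) q.1) (Function.update (rX n m) i (rP n m a i))]
      rw [Finset.sum_eq_single i]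
      · rw [bigM_swap v (rX n m i) (rP n m a i) (rX n m) i, Function.update_eq_self]
        ring
      · intro k _ hk
        have hup : Function.update (rX n m) i (rP n m a i) k = rX n m k :=
          Function.update_of_ne hk _ _
        rw [← hup, bigM_dup v (Function.update (rX n m) i (rP n m a i)) k, mul_zero]
      · intro hi
        exact absurd (Finset.mem_univ i) hi
    rw [hA1, hA2, hA3, hA4]
    ring
  calc ∑ j : Fin (n + 1), (-1 : ℝ) ^ (j : ℕ) *
        fderiv ℝ (fun y => Φ y (j.removeNth v)) q (v j)
      = ∑ j : Fin (n + 1), ∑ a, ∑ i, (-1 : ℝ) ^ (j : ℕ) *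
        ((fderiv ℝ (g a i) q.1 (v j).1 * q.2.2 a i + g a i q.1 * (v j).2.2 a i)
            * (rmat (j.removeNth v) (rX n m)).det
          - fderiv ℝ (g a i) q.1 (v j).1
            * (rmat (j.removeNth v) (Function.update (rX n m) i (rU n m a))).det
          + fderiv ℝ (fun z => H z a) q.1 (v j).1
            * (rmat (j.removeNth v) (Function.update (rX n m) i (rP n m a i))).det) := by
        refine Finset.sum_congr rfl fun j _ => ?_
        rw [keyD (j.removeNth v) (v j)]
        simp only [Finset.mul_sum]
    _ = ∑ a, ∑ i, ∑ j : Fin (n + 1), (-1 : ℝ) ^ (j : ℕ) *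
        ((fderiv ℝ (g a i) q.1 (v j).1 * q.2.2 a i + g a i q.1 * (v j).2.2 a i)
            * (rmat (j.removeNth v) (rX n m)).det
          - fderiv ℝ (g a i) q.1 (v j).1
            * (rmat (j.removeNth v) (Function.update (rX n m) i (rU n m a))).det
          + fderiv ℝ (fun z => H z a) q.1 (v j).1
            * (rmat (j.removeNth v) (Function.update (rX n m) i (rP n m a i))).det) := by
        rw [Finset.sum_comm]
        exact Finset.sum_congr rfl fun a _ => Finset.sum_comm
    _ = ∑ a, ∑ i, fderiv ℝ (g a i) q.1 (Pi.single i 1)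
          * (bigM v (rU n m a) (rX n m)).det :=
        Finset.sum_congr rfl fun a _ => Finset.sum_congr rfl fun i _ => main a i
    _ = ∑ a, (∑ i, fderiv ℝ (g a i) q.1 (Pi.single i 1))
          * (bigM v (rU n m a) (rX n m)).det :=
        Finset.sum_congr rfl fun a _ => (Finset.sum_mul _ _ _).symm
    _ = 0 := by
        refine Finset.sum_eq_zero fun a _ => ?_
        have h0 : (∑ i, fderiv ℝ (g a i) q.1 (Pi.single i 1)) = 0 := hharm a q.1
        rw [h0, zero_mul]
end

section
/- With notation as in the harmonic-function jet space M = J^1(ℝ^n,ℝ^m), let χ : [0,1] × S^{n−1} → M, χ(r,s) = (x(s), u(s), A(s) + (1−r) ζ(s) ᵗN(s)), where g(s) = (x(s),u(s),A(s)) is isotropic and N is the outward unit normal of the embedded hypersurface x∘g(S^{n−1}). Then χ^*θ^a = 0 for all a, and χ^*ψ^a = −ζ^a dr ∧ g^*(N ⌟ ω), where ω = dx^1 ∧ ⋯ ∧ dx^n. -/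
open scoped RealInnerProductSpace

section AuxTC
variable {E : Type*} [NormedAddCommGroup E] [InnerProductSpace ℝ E]
theorem sphere_mem_tangentCone' {s v : E} (hs : s ∈ Metric.sphere (0:E) 1)
    (hv : ⟪v, s⟫ = 0) : v ∈ tangentConeAt ℝ (Metric.sphere (0:E) 1) s := by
  have hsn : ‖s‖ = 1 := by simpa using hs
  have hsv : ⟪s, v⟫ = 0 := by rw [real_inner_comm]; exact hv
  set g : ℝ → ℝ := fun ε => Real.sqrt (1 + ε ^ 2 * ‖v‖ ^ 2) with hg
  have hgpos : ∀ ε : ℝ, 0 < 1 + ε ^ 2 * ‖v‖ ^ 2 := by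
    intro ε; positivity
  have hg0 : g 0 = 1 := by simp [hg]
  have hnorm : ∀ ε : ℝ, ‖s + ε • v‖ = g ε := by
    intro ε
    have h2 : ‖s + ε • v‖ ^ 2 = 1 + ε ^ 2 * ‖v‖ ^ 2 := by
      rw [norm_add_sq_real, real_inner_smul_right, hsv, norm_smul, hsn]
      simp [mul_pow, sq_abs]
    show ‖s + ε • v‖ = Real.sqrt (1 + ε ^ 2 * ‖v‖ ^ 2)
    rw [← h2, Real.sqrt_sq (norm_nonneg _)]
  set φ : ℝ → E := fun ε => (g ε)⁻¹ • (s + ε • v) with hφ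
  have hφ0 : φ 0 = s := by simp [hφ, hg0]
  have hmem : ∀ ε : ℝ, φ ε ∈ Metric.sphere (0:E) 1 := by
    intro ε
    have hgε : g ε ≠ 0 := by
      rw [hg]; exact (Real.sqrt_pos.2 (hgpos ε)).ne'
    simp only [hφ, mem_sphere_iff_norm, sub_zero, norm_smul, hnorm ε,
      norm_inv, Real.norm_eq_abs]
    rw [abs_of_pos (by rw [hg]; exact Real.sqrt_pos.2 (hgpos ε))]
    field_simp
  have hderiv : HasDerivAt φ v 0 := by
    have h1 : HasDerivAt (fun ε : ℝ => 1 + ε ^ 2 * ‖v‖ ^ 2) 0 0 := by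
      have := ((hasDerivAt_pow 2 (0:ℝ)).mul_const (‖v‖ ^ 2)).const_add 1
      simpa using this
    have h2 : HasDerivAt g 0 0 := by
      have hsq := Real.hasDerivAt_sqrt (x := 1 + (0:ℝ) ^ 2 * ‖v‖ ^ 2) (by norm_num)
      have := hsq.comp 0 h1
      rw [mul_zero] at this
      exact this
    have h3 : HasDerivAt (fun ε => (g ε)⁻¹) 0 0 := by
      have := h2.inv (by rw [hg0]; norm_num)
      simp at this
      exact this
    have h4 : HasDerivAt (fun ε : ℝ => s + ε • v) v 0 := by
      have := ((hasDerivAt_id (0:ℝ)).smul_const v).const_add s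
      simpa using this
    have := h3.smul h4
    have hφeq : φ = fun y => (g y)⁻¹ • s + (g y)⁻¹ • y • v := by
      funext y; simp [hφ, smul_add]
    rw [hφeq]
    simp [hg0] at this
    convert this using 1
    funext y; simp [smul_add]
  have hslope : Filter.Tendsto (fun n : ℕ => (((n:ℝ)+1)) • (φ (((n:ℝ)+1)⁻¹) - s))
      Filter.atTop (nhds v) := by
    have hts : Filter.Tendsto (fun n : ℕ => ((n:ℝ)+1)⁻¹) Filter.atTop (nhdsWithin 0 {(0:ℝ)}ᶜ) := by
      apply tendsto_nhdsWithin_of_tendsto_nhds_of_eventually_within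
      · exact tendsto_one_div_add_atTop_nhds_zero_nat.congr (by intro n; simp [one_div])
      · filter_upwards with n
        simp only [Set.mem_compl_iff, Set.mem_singleton_iff]
        positivity
    have := (hasDerivAt_iff_tendsto_slope.1 hderiv).comp hts
    refine this.congr fun n => ?_
    simp only [Function.comp, slope_def_module, sub_zero, hφ0, inv_inv]
  have hnormc : Filter.Tendsto (fun n : ℕ => ‖((n:ℝ)+1)‖) Filter.atTop Filter.atTop := by
    have he : (fun n : ℕ => ‖((n:ℝ)+1)‖) = fun n : ℕ => (n:ℝ)+1 :=
      funext fun n => by rw [Real.norm_eq_abs, abs_of_pos (by positivity)]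
    rw [he]
    exact Filter.tendsto_atTop_add_const_right _ 1 tendsto_natCast_atTop_atTop
  exact mem_tangentConeAt_of_seq Filter.atTop (fun n : ℕ => (n:ℝ)+1) (fun n : ℕ => φ (((n:ℝ)+1)⁻¹) - s)
    (by
      have hc := hderiv.continuousAt.tendsto.comp tendsto_one_div_add_atTop_nhds_zero_nat
      rw [hφ0] at hc
      simpa [one_div, Function.comp_def] using hc.sub_const s)
    (Filter.Eventually.of_forall fun n => by simpa using hmem (((n:ℝ)+1)⁻¹)) hslope
end AuxTC

set_option maxHeartbeats 2000000 in
theorem aux_cofactor {n : ℕ} (G : Matrix (Fin (n+1)) (Fin (n+1)) ℝ) (c t : Fin (n+1) → ℝ) :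
    ∑ i : Fin (n+1), c i * (G.updateRow i t).det
      = ∑ k : Fin (n+1), (-1:ℝ)^(k:ℕ) * t k * Matrix.det (Matrix.of fun p q : Fin (n+1) =>
          (Fin.cons c (fun l : Fin n => fun p' => G p' (k.succAbove l)) :
            Fin (n+1) → Fin (n+1) → ℝ) q p) := by
  have hsub : ∀ i j : Fin (n+1),
      (G.updateRow i t).submatrix i.succAbove j.succAbove
        = G.submatrix i.succAbove j.succAbove := by
    intro i j
    ext p q
    simp [Matrix.updateRow_apply, (Fin.succAbove_ne i p)]
  have hL : ∀ i : Fin (n+1), (G.updateRow i t).det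
      = ∑ j : Fin (n+1), (-1:ℝ)^((i:ℕ)+(j:ℕ)) * t j *
          (G.submatrix i.succAbove j.succAbove).det := by
    intro i
    rw [Matrix.det_succ_row _ i]
    refine Finset.sum_congr rfl fun j _ => ?_
    rw [hsub i j, Matrix.updateRow_self]
  have hR : ∀ k : Fin (n+1), Matrix.det (Matrix.of fun p q : Fin (n+1) =>
          (Fin.cons c (fun l : Fin n => fun p' => G p' (k.succAbove l)) :
            Fin (n+1) → Fin (n+1) → ℝ) q p)
      = ∑ i : Fin (n+1), (-1:ℝ)^(i:ℕ) * c i * (G.submatrix i.succAbove k.succAbove).det := by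
    intro k
    rw [← Matrix.det_transpose]
    have htr : (Matrix.of fun p q : Fin (n+1) =>
          (Fin.cons c (fun l : Fin n => fun p' => G p' (k.succAbove l)) :
            Fin (n+1) → Fin (n+1) → ℝ) q p).transpose
        = Matrix.of fun q p : Fin (n+1) =>
          (Fin.cons c (fun l : Fin n => fun p' => G p' (k.succAbove l)) :
            Fin (n+1) → Fin (n+1) → ℝ) q p := rfl
    rw [htr]
    rw [Matrix.det_succ_row_zero]
    refine Finset.sum_congr rfl fun i _ => ?_
    have h0 : (Matrix.of fun q p : Fin (n+1) =>
          (Fin.cons c (fun l : Fin n => fun p' => G p' (k.succAbove l)) :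
            Fin (n+1) → Fin (n+1) → ℝ) q p) 0 i = c i := by simp
    rw [h0]
    have hsubeq : (Matrix.of fun q p : Fin (n+1) =>
          (Fin.cons c (fun l : Fin n => fun p' => G p' (k.succAbove l)) :
            Fin (n+1) → Fin (n+1) → ℝ) q p).submatrix Fin.succ i.succAbove
        = (G.submatrix i.succAbove k.succAbove).transpose := by
      ext l p
      simp [Fin.cons_succ]
    rw [hsubeq, Matrix.det_transpose]
  calc ∑ i : Fin (n+1), c i * (G.updateRow i t).det
      = ∑ i : Fin (n+1), ∑ j : Fin (n+1), c i * ((-1:ℝ)^((i:ℕ)+(j:ℕ)) * t j *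
          (G.submatrix i.succAbove j.succAbove).det) := by
        refine Finset.sum_congr rfl fun i _ => ?_
        rw [hL i, Finset.mul_sum]
    _ = ∑ j : Fin (n+1), ∑ i : Fin (n+1), c i * ((-1:ℝ)^((i:ℕ)+(j:ℕ)) * t j *
          (G.submatrix i.succAbove j.succAbove).det) := Finset.sum_comm
    _ = _ := by
        refine Finset.sum_congr rfl fun k _ => ?_
        rw [hR k, Finset.mul_sum]
        refine Finset.sum_congr rfl fun i _ => ?_
        rw [pow_add]
        ring


set_option maxHeartbeats 1000000 in
/-- in the jet space `M = J¹(ℝ^{n+1}, ℝ^m)`, let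
`χ(r,s) = (x(s), u(s), A(s) + (1−r) ζ(s) ᵗN(s))` on `ℝ × S^n`, where
`g(s) = (x(s), u(s), A(s))` is isotropic and `N` is the outward unit normal of the embedded
hypersurface `x∘g(S^n)` (so `⟪N, dx(v)⟫ = 0` on sphere-tangent vectors `v`).  Then
`χ^*θ^a = 0` and `χ^*ψ^a = −ζ^a dr ∧ g^*(N ⌟ ω)` with `ω = dx^0 ∧ ⋯ ∧ dx^n`.

Pullbacks are evaluated on tangent vectors `w_j = (t_j, v_j)` of `ℝ × S^n` via the
differential `dχ = fderivWithin` of `χ` on `ℝ × S^n`; `ψ^a` on vectors `W_1,…,W_{n+1}` is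
`Σ_i det(row i ↦ (W_j)_p^{a,i}, rows k≠i ↦ (W_j)_x^k)`, `dr ∧ β` is expanded with the usual
signs, and `(N ⌟ ω)(X_1,…,X_n) = det(N, X_1, …, X_n)`. -/
theorem cylinder_pullback_computation
    (n m : ℕ)
    (x : EuclideanSpace ℝ (Fin (n + 1)) → EuclideanSpace ℝ (Fin (n + 1)))
    (u : EuclideanSpace ℝ (Fin (n + 1)) → Fin m → ℝ)
    (A : EuclideanSpace ℝ (Fin (n + 1)) → Fin m → Fin (n + 1) → ℝ)
    (ζ : EuclideanSpace ℝ (Fin (n + 1)) → Fin m → ℝ)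
    (N : EuclideanSpace ℝ (Fin (n + 1)) → EuclideanSpace ℝ (Fin (n + 1)))
    (S : Set (EuclideanSpace ℝ (Fin (n + 1)))) (hS : S = Metric.sphere 0 1)
    (hx : ContDiffOn ℝ 2 x S) (hu : ContDiffOn ℝ 2 u S)
    (hA : ContDiffOn ℝ 1 (fun s => A s) S) (hζ : ContDiffOn ℝ 1 (fun s => ζ s) S)
    (hN : ContDiffOn ℝ 1 N S)
    (hNunit : ∀ s ∈ S, ‖N s‖ = 1)
    (hNnormal : ∀ s ∈ S, ∀ v : EuclideanSpace ℝ (Fin (n + 1)), ⟪v, s⟫ = 0 →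
      ⟪N s, fderivWithin ℝ x S s v⟫ = 0)
    (hiso : ∀ s ∈ S, ∀ v : EuclideanSpace ℝ (Fin (n + 1)), ⟪v, s⟫ = 0 → ∀ a : Fin m,
      fderivWithin ℝ (fun y => u y a) S s v
        = ∑ i : Fin (n + 1), A s a i * (fderivWithin ℝ x S s v) i)
    (χ : ℝ × EuclideanSpace ℝ (Fin (n + 1)) →
      EuclideanSpace ℝ (Fin (n + 1)) × (Fin m → ℝ) × (Fin m → Fin (n + 1) → ℝ))
    (hχ : ∀ r s, χ (r, s) =
      (x s, u s, fun a i => A s a i + (1 - r) * ζ s a * N s i)) :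
    ∀ (r : ℝ), r ∈ Set.Icc (0:ℝ) 1 → ∀ s ∈ S,
      -- χ^*θ^a = 0 :
      (∀ (t : ℝ) (v : EuclideanSpace ℝ (Fin (n + 1))), ⟪v, s⟫ = 0 → ∀ a : Fin m,
        (fderivWithin ℝ χ (Set.univ ×ˢ S) (r, s) (t, v)).2.1 a
          - ∑ i : Fin (n + 1), (χ (r, s)).2.2 a i *
              (fderivWithin ℝ χ (Set.univ ×ˢ S) (r, s) (t, v)).1 i = 0) ∧
      -- χ^*ψ^a = −ζ^a dr ∧ g^*(N ⌟ ω) :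
      (∀ (w : Fin (n + 1) → ℝ × EuclideanSpace ℝ (Fin (n + 1))),
        (∀ j, ⟪(w j).2, s⟫ = 0) → ∀ a : Fin m,
        ∑ i : Fin (n + 1), Matrix.det (Matrix.of fun k j : Fin (n + 1) =>
            if k = i then (fderivWithin ℝ χ (Set.univ ×ˢ S) (r, s) (w j)).2.2 a i
            else (fderivWithin ℝ χ (Set.univ ×ˢ S) (r, s) (w j)).1 k)
        = -(ζ s a) * ∑ k : Fin (n + 1), (-1 : ℝ) ^ (k : ℕ) * (w k).1 *
            Matrix.det (Matrix.of fun p q : Fin (n + 1) =>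
              (Fin.cons (N s) (fun l : Fin n =>
                fderivWithin ℝ x S s ((k.removeNth w l).2)) : Fin (n + 1) →
                  EuclideanSpace ℝ (Fin (n + 1))) q p)) := by
  have hχf : χ = fun p : ℝ × EuclideanSpace ℝ (Fin (n + 1)) =>
      (x p.2, u p.2, fun a i => A p.2 a i + (1 - p.1) * ζ p.2 a * N p.2 i) :=
    funext fun p => hχ p.1 p.2
  intro r _hr s hs
  have hTC : ∀ v : EuclideanSpace ℝ (Fin (n + 1)), ⟪v, s⟫ = 0 →
      v ∈ tangentConeAt ℝ S s := by
    intro v hv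
    rw [hS]
    exact sphere_mem_tangentCone' (hS ▸ hs) hv
  -- basic derivative facts on S
  have hxd : HasFDerivWithinAt x (fderivWithin ℝ x S s) S s :=
    (hx.differentiableOn (by norm_num) s hs).hasFDerivWithinAt
  have had : HasFDerivWithinAt u (fderivWithin ℝ u S s) S s :=
    (hu.differentiableOn (by norm_num) s hs).hasFDerivWithinAt
  have hAd : HasFDerivWithinAt A (fderivWithin ℝ A S s) S s :=
    (hA.differentiableOn (by norm_num) s hs).hasFDerivWithinAt
  have hζd : HasFDerivWithinAt ζ (fderivWithin ℝ ζ S s) S s :=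
    (hζ.differentiableOn (by norm_num) s hs).hasFDerivWithinAt
  have hNd : HasFDerivWithinAt N (fderivWithin ℝ N S s) S s :=
    (hN.differentiableOn (by norm_num) s hs).hasFDerivWithinAt
  set X := fderivWithin ℝ x S s with hXdef
  set U := fderivWithin ℝ u S s with hUdef
  set BB := fderivWithin ℝ A S s with hBdef
  set ZZ := fderivWithin ℝ ζ S s with hZdef
  set NNd := fderivWithin ℝ N S s with hNNdef
  set sndL := ContinuousLinearMap.snd ℝ ℝ (EuclideanSpace ℝ (Fin (n + 1))) with hsndL
  set fstL := ContinuousLinearMap.fst ℝ ℝ (EuclideanSpace ℝ (Fin (n + 1))) with hfstL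
  have hmt : Set.MapsTo (Prod.snd : ℝ × EuclideanSpace ℝ (Fin (n + 1)) → EuclideanSpace ℝ (Fin (n + 1))) (Set.univ ×ˢ S) S := by
    intro p hp
    exact hp.2
  have hxp : HasFDerivWithinAt (fun p : ℝ × EuclideanSpace ℝ (Fin (n + 1)) => x p.2) (X.comp sndL)
      (Set.univ ×ˢ S) (r, s) := hxd.comp (r, s) hasFDerivWithinAt_snd hmt
  have hup : HasFDerivWithinAt (fun p : ℝ × EuclideanSpace ℝ (Fin (n + 1)) => u p.2) (U.comp sndL)
      (Set.univ ×ˢ S) (r, s) := had.comp (r, s) hasFDerivWithinAt_snd hmt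
  have hAp : HasFDerivWithinAt (fun p : ℝ × EuclideanSpace ℝ (Fin (n + 1)) => A p.2) (BB.comp sndL)
      (Set.univ ×ˢ S) (r, s) := hAd.comp (r, s) hasFDerivWithinAt_snd hmt
  have hζp : HasFDerivWithinAt (fun p : ℝ × EuclideanSpace ℝ (Fin (n + 1)) => ζ p.2) (ZZ.comp sndL)
      (Set.univ ×ˢ S) (r, s) := hζd.comp (r, s) hasFDerivWithinAt_snd hmt
  have hNp : HasFDerivWithinAt (fun p : ℝ × EuclideanSpace ℝ (Fin (n + 1)) => N p.2) (NNd.comp sndL)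
      (Set.univ ×ˢ S) (r, s) := hNd.comp (r, s) hasFDerivWithinAt_snd hmt
  -- scalar coordinate derivatives
  set Dai : Fin m → Fin (n+1) → (ℝ × EuclideanSpace ℝ (Fin (n + 1)) →L[ℝ] ℝ) := fun a i =>
    (ContinuousLinearMap.proj i).comp ((ContinuousLinearMap.proj a).comp (BB.comp sndL))
    + ((((1 - r) * ζ s a) • ((EuclideanSpace.proj i).comp (NNd.comp sndL)))
      + (N s i) • ((1 - r) • ((ContinuousLinearMap.proj a).comp (ZZ.comp sndL))
          + (ζ s a) • (-fstL))) with hDai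
  have hDaiD : ∀ a i, HasFDerivWithinAt
      (fun p : ℝ × EuclideanSpace ℝ (Fin (n + 1)) => A p.2 a i + (1 - p.1) * ζ p.2 a * N p.2 i)
      (Dai a i) (Set.univ ×ˢ S) (r, s) := by
    intro a i
    have hAa : HasFDerivWithinAt (fun p : ℝ × EuclideanSpace ℝ (Fin (n + 1)) => A p.2 a i)
        ((ContinuousLinearMap.proj i).comp
          ((ContinuousLinearMap.proj a).comp (BB.comp sndL))) (Set.univ ×ˢ S) (r, s) :=
      (ContinuousLinearMap.proj i :
          (Fin (n+1) → ℝ) →L[ℝ] ℝ).hasFDerivAt.comp_hasFDerivWithinAt (r, s)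
        ((ContinuousLinearMap.proj a :
          (Fin m → Fin (n+1) → ℝ) →L[ℝ] (Fin (n+1) → ℝ)).hasFDerivAt.comp_hasFDerivWithinAt
            (r, s) hAp)
    have hζa : HasFDerivWithinAt (fun p : ℝ × EuclideanSpace ℝ (Fin (n + 1)) => ζ p.2 a)
        ((ContinuousLinearMap.proj a).comp (ZZ.comp sndL)) (Set.univ ×ˢ S) (r, s) :=
      (ContinuousLinearMap.proj a :
          (Fin m → ℝ) →L[ℝ] ℝ).hasFDerivAt.comp_hasFDerivWithinAt (r, s) hζp
    have hNa : HasFDerivWithinAt (fun p : ℝ × EuclideanSpace ℝ (Fin (n + 1)) => N p.2 i)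
        ((EuclideanSpace.proj i).comp (NNd.comp sndL)) (Set.univ ×ˢ S) (r, s) :=
      (EuclideanSpace.proj (𝕜 := ℝ) i).hasFDerivAt.comp_hasFDerivWithinAt (r, s) hNp
    have h1r : HasFDerivWithinAt (fun p : ℝ × EuclideanSpace ℝ (Fin (n + 1)) => 1 - p.1) (-fstL)
        (Set.univ ×ˢ S) (r, s) := hasFDerivWithinAt_fst.const_sub 1
    have hmul1 := h1r.mul hζa
    have hmul2 := hmul1.mul hNa
    refine (hAa.add hmul2).congr_fderiv ?_
    apply ContinuousLinearMap.ext; intro p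
    simp [hDai, hsndL, hfstL, smul_eq_mul]
  set D3 : (ℝ × EuclideanSpace ℝ (Fin (n + 1))) →L[ℝ] (Fin m → Fin (n+1) → ℝ) :=
    ContinuousLinearMap.pi (fun a => ContinuousLinearMap.pi (fun i => Dai a i)) with hD3
  have hD3d : HasFDerivWithinAt
      (fun p : ℝ × EuclideanSpace ℝ (Fin (n + 1)) => (fun a i => A p.2 a i + (1 - p.1) * ζ p.2 a * N p.2 i))
      D3 (Set.univ ×ˢ S) (r, s) := by
    apply hasFDerivWithinAt_pi'.2
    intro a
    rw [hD3, ContinuousLinearMap.proj_pi]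
    apply hasFDerivWithinAt_pi'.2
    intro i
    rw [ContinuousLinearMap.proj_pi]
    exact hDaiD a i
  set D : (ℝ × EuclideanSpace ℝ (Fin (n + 1))) →L[ℝ] EuclideanSpace ℝ (Fin (n + 1)) × (Fin m → ℝ) × (Fin m → Fin (n+1) → ℝ) :=
    (X.comp sndL).prod ((U.comp sndL).prod D3) with hD
  have hDd : HasFDerivWithinAt χ D (Set.univ ×ˢ S) (r, s) := by
    rw [hχf]; exact hxp.prodMk (hup.prodMk hD3d)
  have hEq : Set.EqOn (fderivWithin ℝ χ (Set.univ ×ˢ S) (r, s)) D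
      (tangentConeAt ℝ (Set.univ ×ˢ S) (r, s)) :=
    hDd.differentiableWithinAt.hasFDerivWithinAt.unique_on hDd
  have hkey : ∀ (t : ℝ) (v : EuclideanSpace ℝ (Fin (n + 1))), ⟪v, s⟫ = 0 →
      fderivWithin ℝ χ (Set.univ ×ˢ S) (r, s) (t, v) = D (t, v) := by
    intro t v hv
    have h1 : ((t, (0 : EuclideanSpace ℝ (Fin (n + 1)))) : ℝ × EuclideanSpace ℝ (Fin (n + 1))) ∈
        tangentConeAt ℝ (Set.univ ×ˢ S) (r, s) := by
      apply subset_tangentConeAt_prod_left (subset_closure hs)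
      refine ⟨t, ?_, rfl⟩
      rw [tangentConeAt_univ]; trivial
    have h2 : (((0:ℝ), v) : ℝ × EuclideanSpace ℝ (Fin (n + 1))) ∈
        tangentConeAt ℝ (Set.univ ×ˢ S) (r, s) := by
      apply subset_tangentConeAt_prod_right (by simp)
      exact ⟨v, hTC v hv, rfl⟩
    have e1 := hEq h1
    have e2 := hEq h2
    have hsum : ((t, v) : ℝ × EuclideanSpace ℝ (Fin (n + 1)))
        = (t, (0 : EuclideanSpace ℝ (Fin (n + 1)))) + ((0:ℝ), v) := by simp
    rw [hsum, map_add, map_add, e1, e2]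
  have hD1 : ∀ (t : ℝ) (v : EuclideanSpace ℝ (Fin (n + 1))), (D (t, v)).1 = X v := fun _ _ => rfl
  have hD2 : ∀ (t : ℝ) (v : EuclideanSpace ℝ (Fin (n + 1))), (D (t, v)).2.1 = U v := fun _ _ => rfl
  have hD3v : ∀ (t : ℝ) (v : EuclideanSpace ℝ (Fin (n + 1))) (a : Fin m) (i : Fin (n + 1)),
      (D (t, v)).2.2 a i
        = (BB v a i + (1 - r) * ζ s a * NNd v i + N s i * ((1 - r) * ZZ v a))
          + t * (-(ζ s a * N s i)) := by
    intro t v a i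
    show (Dai a i) (t, v) = _
    rw [hDai]
    simp [hsndL, hfstL, ContinuousLinearMap.proj_apply, smul_eq_mul, ContinuousLinearMap.coe_snd',
      ContinuousLinearMap.coe_fst']
    ring
  refine ⟨?_, ?_⟩
  · intro t v hv a
    have hcoord : HasFDerivWithinAt (fun y => u y a)
        ((ContinuousLinearMap.proj a : (Fin m → ℝ) →L[ℝ] ℝ).comp U) S s :=
      (ContinuousLinearMap.proj a :
        (Fin m → ℝ) →L[ℝ] ℝ).hasFDerivAt.comp_hasFDerivWithinAt s had
    have hU : U v a = ∑ i : Fin (n + 1), A s a i * X v i := by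
      have h := (hcoord.differentiableWithinAt.hasFDerivWithinAt.unique_on hcoord)
        (hTC v hv)
      rw [hiso s hs v hv a] at h
      simpa using h.symm
    have hz : ∑ i : Fin (n + 1), N s i * X v i = 0 := by
      have h := hNnormal s hs v hv
      simp [PiLp.inner_apply, RCLike.inner_apply] at h
      rw [← h]
      exact Finset.sum_congr rfl fun i _ => mul_comm _ _
    rw [hkey t v hv, hχ r s]
    simp only [hD1, hD2, hU]
    simp only [add_mul, Finset.sum_add_distrib]
    have h3 : ∑ i : Fin (n + 1), (1 - r) * ζ s a * N s i * X v i
        = (1 - r) * ζ s a * ∑ i : Fin (n + 1), N s i * X v i := by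
      rw [Finset.mul_sum]
      exact Finset.sum_congr rfl fun i _ => by ring
    rw [h3, hz, mul_zero]
    ring
  · intro w hw a
    have hkey' : ∀ j, fderivWithin ℝ χ (Set.univ ×ˢ S) (r, s) (w j) = D ((w j).1, (w j).2) :=
      fun j => hkey (w j).1 (w j).2 (hw j)
    set v : Fin (n+1) → EuclideanSpace ℝ (Fin (n+1)) := fun j => (w j).2 with hvdef
    set tt : Fin (n+1) → ℝ := fun j => (w j).1 with httdef
    set G : Matrix (Fin (n+1)) (Fin (n+1)) ℝ := Matrix.of fun k j => X (v j) k with hG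
    set c : Fin (n+1) → ℝ := fun i => -(ζ s a * N s i) with hc
    set TL : Fin (n+1) → (EuclideanSpace ℝ (Fin (n+1)) →L[ℝ] (Fin (n+1) → ℝ)) := fun i =>
      ContinuousLinearMap.pi (fun k =>
        if k = i then
          ((ContinuousLinearMap.proj i :
              (Fin (n+1) → ℝ) →L[ℝ] ℝ).comp ((ContinuousLinearMap.proj a :
              (Fin m → Fin (n+1) → ℝ) →L[ℝ] (Fin (n+1) → ℝ)).comp BB)
            + ((1 - r) * ζ s a) • ((EuclideanSpace.proj i :
                EuclideanSpace ℝ (Fin (n+1)) →L[ℝ] ℝ).comp NNd)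
            + (N s i * (1 - r)) • ((ContinuousLinearMap.proj a :
                (Fin m → ℝ) →L[ℝ] ℝ).comp ZZ))
        else (EuclideanSpace.proj k :
                EuclideanSpace ℝ (Fin (n+1)) →L[ℝ] ℝ).comp X) with hTL
    have hTLval : ∀ (i : Fin (n+1)) (y : EuclideanSpace ℝ (Fin (n+1))) (k : Fin (n+1)),
        TL i y k = if k = i then
            (BB y a i + (1 - r) * ζ s a * NNd y i + N s i * ((1 - r) * ZZ y a))
          else X y k := by
      intro i y k
      rw [hTL]
      by_cases h : k = i
      · simp [h, ContinuousLinearMap.pi_apply, smul_eq_mul]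
        ring
      · simp [h, ContinuousLinearMap.pi_apply]
    -- linear dependence of the tangent vectors
    have hdep : ¬ LinearIndependent ℝ v := by
      intro hli
      have hvm : ∀ j, v j ∈ (ℝ ∙ s)ᗮ := fun j =>
        Submodule.mem_orthogonal_singleton_iff_inner_left.2 (hw j)
      have hs0 : s ≠ 0 := by
        have hss : s ∈ Metric.sphere (0 : EuclideanSpace ℝ (Fin (n+1))) 1 := hS ▸ hs
        intro h0
        rw [h0] at hss
        simp at hss
      have hsp : Submodule.span ℝ (Set.range v) ≤ (ℝ ∙ s)ᗮ := by
        rw [Submodule.span_le]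
        rintro _ ⟨j, rfl⟩
        exact hvm j
      have h1 := Submodule.finrank_mono hsp
      rw [finrank_span_eq_card hli] at h1
      have h2 : Module.finrank ℝ ((ℝ ∙ s)ᗮ : Submodule ℝ (EuclideanSpace ℝ (Fin (n+1)))) = n := by
        have h3 := Submodule.finrank_add_finrank_orthogonal (K := (ℝ ∙ s))
        rw [finrank_span_singleton hs0] at h3
        have h4 : Module.finrank ℝ (EuclideanSpace ℝ (Fin (n+1))) = n + 1 := by
          simp [finrank_euclideanSpace]
        omega
      rw [h2, Fintype.card_fin] at h1
      omega
    -- identify the matrices in the goal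
    have hMeq : ∀ i : Fin (n+1),
        (Matrix.of fun k j : Fin (n + 1) =>
            if k = i then (fderivWithin ℝ χ (Set.univ ×ˢ S) (r, s) (w j)).2.2 a i
            else (fderivWithin ℝ χ (Set.univ ×ˢ S) (r, s) (w j)).1 k)
          = G.updateRow i ((fun j => TL i (v j) i) + (fun j => tt j * c i)) := by
      intro i
      ext k j
      rw [Matrix.of_apply, Matrix.updateRow_apply]
      by_cases h : k = i
      · rw [if_pos h, if_pos h, hkey' j, hD3v]
        rw [Pi.add_apply, hTLval i (v j) i, if_pos rfl]
      · rw [if_neg h, if_neg h, hkey' j]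
        have : (D ((w j).1, (w j).2)).1 = X (v j) := hD1 (w j).1 (w j).2
        rw [this]
        rfl
    have hA0 : ∀ i : Fin (n+1), (G.updateRow i (fun j => TL i (v j) i)).det = 0 := by
      intro i
      have htr : G.updateRow i (fun j => TL i (v j) i)
          = Matrix.transpose (Matrix.of fun j k => TL i (v j) k) := by
        ext k j
        rw [Matrix.updateRow_apply, Matrix.transpose_apply, Matrix.of_apply]
        by_cases h : k = i
        · subst h
          rw [if_pos rfl]
        · rw [if_neg h, hTLval i (v j) k, if_neg h]
          rfl
      rw [htr, Matrix.det_transpose]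
      have hdet : (Matrix.of fun j k => TL i (v j) k).det
          = (Matrix.detRowAlternating.compLinearMap ((TL i) : EuclideanSpace ℝ (Fin (n+1)) →ₗ[ℝ] (Fin (n+1) → ℝ))) v := rfl
      rw [hdet]
      exact AlternatingMap.map_linearDependent _ v hdep
    calc ∑ i : Fin (n + 1), Matrix.det (Matrix.of fun k j : Fin (n + 1) =>
            if k = i then (fderivWithin ℝ χ (Set.univ ×ˢ S) (r, s) (w j)).2.2 a i
            else (fderivWithin ℝ χ (Set.univ ×ˢ S) (r, s) (w j)).1 k)
        = ∑ i : Fin (n + 1),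
            ((G.updateRow i (fun j => TL i (v j) i)).det
              + (G.updateRow i (fun j => tt j * c i)).det) := by
          refine Finset.sum_congr rfl fun i _ => ?_
          rw [hMeq i, Matrix.det_updateRow_add]
      _ = ∑ i : Fin (n + 1), (G.updateRow i (fun j => tt j * c i)).det := by
          refine Finset.sum_congr rfl fun i _ => ?_
          rw [hA0 i, zero_add]
      _ = ∑ i : Fin (n + 1), -(ζ s a) * ((fun i => N s i) i * (G.updateRow i tt).det) := by
          refine Finset.sum_congr rfl fun i _ => ?_
          have hrow : (fun j => tt j * c i) = c i • tt := by
            funext j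
            simp [smul_eq_mul, mul_comm]
          rw [hrow, Matrix.det_updateRow_smul, hc]
          ring
      _ = -(ζ s a) * ∑ i : Fin (n + 1), (fun i => N s i) i * (G.updateRow i tt).det := by
          rw [Finset.mul_sum]
      _ = -(ζ s a) * ∑ k : Fin (n + 1), (-1:ℝ)^(k:ℕ) * tt k *
            Matrix.det (Matrix.of fun p q : Fin (n+1) =>
              (Fin.cons (fun i => N s i) (fun l : Fin n => fun p' => G p' (k.succAbove l)) :
                Fin (n+1) → Fin (n+1) → ℝ) q p) := by
          rw [aux_cofactor G (fun i => N s i) tt]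
      _ = _ := by
          congr 1
          refine Finset.sum_congr rfl fun k _ => ?_
          congr 2
          ext p q
          refine Fin.cases ?_ (fun l => ?_) q
          · simp
          · simp [hG, hvdef, Fin.removeNth]
end
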